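/- Suppose w : [γ/β,∞) × (0,∞) → ℝ is continuous, is continuously differentiable on (γ/β,∞) × (0,∞) where it satisfies the partial differential equation β x y ∂ₓw(x,y) + (γ − β x) y ∂_y w(x,y) = 1, and satisfies the boundary condition w(γ/β, y) = 0 for all y > 0. Then for every x > γ/β and y > 0, w(x, y) = v(x, y), the first time that the susceptible population of the SIR solution with initial data (x, y) falls below γ/β. In particular, such a solution w of the boundary-value problem is unique. -/

import Mathlib

open Set Filter

/-- An SIR solution with parameters β, γ and initial data (x, y):
differentiable functions S, I on [0,∞) with S' = -βSI, I' = βSI - γI,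
S(0) = x, I(0) = y. -/
def IsSIRSolution (β γ x y : ℝ) (S I : ℝ → ℝ) : Prop :=
  S 0 = x ∧ I 0 = y ∧
  ∀ t, 0 ≤ t →
    HasDerivWithinAt S (-(β * S t * I t)) (Set.Ici 0) t ∧
    HasDerivWithinAt I (β * S t * I t - γ * I t) (Set.Ici 0) t

theorem stmt_13 (β γ : ℝ) (hβ : 0 < β) (hγ : 0 < γ)
    (w : ℝ × ℝ → ℝ)
    (hw_cont : ContinuousOn w (Set.Ici (γ / β) ×ˢ Set.Ioi 0))
    (hw_diff : ContDiffOn ℝ 1 w (Set.Ioi (γ / β) ×ˢ Set.Ioi 0))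
    (hw_pde : ∀ p ∈ (Set.Ioi (γ / β)) ×ˢ (Set.Ioi (0:ℝ)),
      β * p.1 * p.2 * fderiv ℝ w p (1, 0) +
        (γ - β * p.1) * p.2 * fderiv ℝ w p (0, 1) = 1)
    (hw_bc : ∀ y : ℝ, 0 < y → w (γ / β, y) = 0)
    (x y : ℝ) (hx : γ / β < x) (hy : 0 < y)
    (S I : ℝ → ℝ) (hSI : IsSIRSolution β γ x y S I)
    (v : ℝ) (hv : IsLeast {t : ℝ | 0 ≤ t ∧ S t ≤ γ / β} v) :
    w (x, y) = v := by
  obtain ⟨hS0, hI0, hode⟩ := hSI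
  obtain ⟨⟨hv0, hvS⟩, hvlb⟩ := hv
  have hScont : ContinuousOn S (Ici 0) := fun t ht => ((hode t ht).1).continuousWithinAt
  have hIcont : ContinuousOn I (Ici 0) := fun t ht => ((hode t ht).2).continuousWithinAt
  have hvpos : 0 < v := by
    rcases lt_or_eq_of_le hv0 with h | h
    · exact h
    · exfalso; rw [← h, hS0] at hvS; exact absurd hvS (not_le.mpr hx)
  -- S t > γ/β on [0, v)
  have hSgt : ∀ t ∈ Ico (0:ℝ) v, γ / β < S t := by
    rintro t ⟨ht0, htv⟩
    by_contra h
    exact absurd (hvlb ⟨ht0, not_lt.mp h⟩) (not_le.mpr htv)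
  -- I is positive on [0, v]
  set a : ℝ → ℝ := fun s => γ - β * S s with ha
  have hacont : ContinuousOn a (Ici 0) :=
    continuousOn_const.sub (continuousOn_const.mul hScont)
  set A : ℝ → ℝ := fun t => ∫ s in (0:ℝ)..t, a s with hA
  have haint : ∀ t : ℝ, 0 ≤ t → IntervalIntegrable a MeasureTheory.volume 0 t := by
    intro t ht
    apply ContinuousOn.intervalIntegrable
    apply hacont.mono
    rw [uIcc_of_le ht]
    exact Icc_subset_Ici_self
  have hAderiv : ∀ t ∈ Ici (0:ℝ), HasDerivWithinAt A (a t) (Ici t) t := by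
    intro t ht
    refine intervalIntegral.integral_hasDerivWithinAt_right (haint t ht) ?_ ?_
    · exact ContinuousOn.stronglyMeasurableAtFilter_nhdsWithin
        (hacont.mono (fun s hs => le_trans ht (le_of_lt hs))) measurableSet_Ioi t
    · exact ((hacont t ht).mono (by intro s hs; simp only [mem_Ioi, mem_Ici] at hs ⊢; linarith [mem_Ici.mp ht]))
  have hAcont : ContinuousOn A (Icc 0 v) := by
    have := intervalIntegral.continuousOn_primitive_interval
      (f := a) (a := 0) (b := v) (μ := MeasureTheory.volume) ?_
    · rwa [uIcc_of_le hv0] at this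
    · rw [uIcc_of_le hv0]
      exact (hacont.mono Icc_subset_Ici_self).integrableOn_Icc
  have hIpos : ∀ t ∈ Icc (0:ℝ) v, 0 < I t := by
    have hconst : ∀ t ∈ Icc (0:ℝ) v, I t * Real.exp (A t) = I 0 * Real.exp (A 0) := by
      apply constant_of_has_deriv_right_zero
      · exact ((hIcont.mono (Icc_subset_Ici_self)).mul (Real.continuous_exp.comp_continuousOn hAcont))
      · rintro t ⟨ht0, htv⟩
        have hI' : HasDerivWithinAt I (β * S t * I t - γ * I t) (Ici t) t :=
          ((hode t ht0).2).mono (Ici_subset_Ici.mpr ht0)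
        have hE : HasDerivWithinAt (fun s => Real.exp (A s)) (Real.exp (A t) * a t) (Ici t) t :=
          (hAderiv t ht0).exp
        have hmul := hI'.mul hE
        have : (β * S t * I t - γ * I t) * Real.exp (A t) + I t * (Real.exp (A t) * a t) = 0 := by
          simp only [ha]; ring
        rwa [this] at hmul
    intro t ht
    have h1 := hconst t ht
    have hA0 : A 0 = 0 := intervalIntegral.integral_same
    rw [hI0, hA0] at h1
    have h2 : 0 < I t * Real.exp (A t) := by
      rw [h1, Real.exp_zero, mul_one]; exact hy
    nlinarith [Real.exp_pos (A t)]
  -- S v = γ/β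
  have hSveq : S v = γ / β := by
    refine le_antisymm hvS ?_
    by_contra h
    push_neg at h
    have hmem : γ / β ∈ Icc (S v) (S 0) := ⟨h.le, by rw [hS0]; exact hx.le⟩
    obtain ⟨t, ht, hSt⟩ := intermediate_value_Icc' hv0
      (hScont.mono (Icc_subset_Ici_self)) hmem
    have : v ≤ t := hvlb ⟨ht.1, hSt.le⟩
    have : t = v := le_antisymm ht.2 this
    rw [this] at hSt
    exact absurd hSt h.ne
  have hSge : ∀ t ∈ Icc (0:ℝ) v, γ / β ≤ S t := by
    rintro t ⟨ht0, htv⟩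
    rcases lt_or_eq_of_le htv with h | h
    · exact (hSgt t ⟨ht0, h⟩).le
    · rw [h, hSveq]
  -- Main argument: g t = w (S t, I t) + t is constant on [0, v]
  have hgconst : ∀ t ∈ Icc (0:ℝ) v, w (S t, I t) + t = w (S 0, I 0) + 0 := by
    apply constant_of_has_deriv_right_zero
    · apply ContinuousOn.add _ continuousOn_id
      apply hw_cont.comp ((hScont.mono Icc_subset_Ici_self).prodMk
        (hIcont.mono Icc_subset_Ici_self))
      rintro t ht
      exact ⟨hSge t ht, hIpos t ht⟩
    · rintro t ⟨ht0, htv⟩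
      have hpmem : (S t, I t) ∈ (Ioi (γ / β)) ×ˢ (Ioi (0:ℝ)) :=
        ⟨hSgt t ⟨ht0, htv⟩, hIpos t ⟨ht0, htv.le⟩⟩
      have hopen : IsOpen ((Ioi (γ / β)) ×ˢ (Ioi (0:ℝ))) := isOpen_Ioi.prod isOpen_Ioi
      have hfd : HasFDerivAt w (fderiv ℝ w (S t, I t)) (S t, I t) :=
        ((hw_diff.differentiableOn one_ne_zero).differentiableAt
          (hopen.mem_nhds hpmem)).hasFDerivAt
      have hcurve : HasDerivWithinAt (fun s => (S s, I s))
          (-(β * S t * I t), β * S t * I t - γ * I t) (Ici t) t :=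
        (((hode t ht0).1).mono (Ici_subset_Ici.mpr ht0)).prodMk
          (((hode t ht0).2).mono (Ici_subset_Ici.mpr ht0))
      have hcomp := hfd.comp_hasDerivWithinAt t hcurve
      have hone : HasDerivWithinAt (fun s : ℝ => s) 1 (Ici t) t :=
        (hasDerivAt_id t).hasDerivWithinAt
      have hsum := hcomp.add hone
      have hlin : (fderiv ℝ w (S t, I t)) (-(β * S t * I t), β * S t * I t - γ * I t)
          = -(β * S t * I t) * (fderiv ℝ w (S t, I t)) (1, 0)
            + (β * S t * I t - γ * I t) * (fderiv ℝ w (S t, I t)) (0, 1) := by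
        have : ((-(β * S t * I t), β * S t * I t - γ * I t) : ℝ × ℝ)
            = (-(β * S t * I t)) • ((1:ℝ), (0:ℝ)) + (β * S t * I t - γ * I t) • ((0:ℝ), (1:ℝ)) := by
          simp [Prod.ext_iff]
        rw [this, map_add, map_smul, map_smul, smul_eq_mul, smul_eq_mul]
      have hpde := hw_pde (S t, I t) hpmem
      have hzero : (fderiv ℝ w (S t, I t)) (-(β * S t * I t), β * S t * I t - γ * I t) + 1 = 0 := by
        rw [hlin]
        linear_combination -hpde
      rwa [hzero] at hsum
  have hgv := hgconst v ⟨hv0, le_rfl⟩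
  rw [hSveq, hw_bc (I v) (hIpos v ⟨hv0, le_rfl⟩), hS0, hI0, zero_add, add_zero] at hgv
  exact hgv.symm
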